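/- Let λx, λy > 0 and ρ ∈ (−1,1). Then the cubic polynomial R_{(λx,λy,ρ)}(X) = 1 + (1 − ρ²·λx·λy − λx − λy)·X + (λx·λy − λx − λy)·X² + λx·λy·X³ has exactly two strictly positive real roots counted with multiplicity; i.e., the multiset of real roots of R_{(λx,λy,ρ)} (with multiplicity) contains exactly two strictly positive elements, denoted r⁻(λx,λy,ρ) ≤ r⁺(λx,λy,ρ). -/
import Mathlib

open Polynomial

/-- For `λx, λy > 0` and `ρ ∈ (−1,1)`, the cubic polynomial
`R_{(λx,λy,ρ)}(X) = 1 + (1 − ρ²·λx·λy − λx − λy)·X + (λx·λy − λx − λy)·X² + λx·λy·X³`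
has exactly two strictly positive real roots counted with multiplicity. -/
theorem cubic_R_has_two_positive_roots (lx ly ρ : ℝ) (hlx : 0 < lx) (hly : 0 < ly)
    (hρ : ρ ∈ Set.Ioo (-1 : ℝ) 1) :
    (((C 1 + C (1 - ρ ^ 2 * lx * ly - lx - ly) * X + C (lx * ly - lx - ly) * X ^ 2 +
        C (lx * ly) * X ^ 3 : ℝ[X]).roots).filter (fun x => 0 < x)).card = 2 := by
  obtain ⟨hρ1, hρ2⟩ := hρ
  set p : ℝ[X] := C 1 + C (1 - ρ ^ 2 * lx * ly - lx - ly) * X + C (lx * ly - lx - ly) * X ^ 2 +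
      C (lx * ly) * X ^ 3 with hp
  have hρsq : ρ ^ 2 < 1 := by nlinarith
  have heval : ∀ x : ℝ, p.eval x =
      1 + (1 - ρ ^ 2 * lx * ly - lx - ly) * x + (lx * ly - lx - ly) * x ^ 2 + lx * ly * x ^ 3 := by
    intro x; simp [hp]
  have hp0 : p ≠ 0 := by
    intro h
    have := heval 0
    rw [h] at this
    simp at this
  have hdeg : p.natDegree = 3 := by
    rw [hp]
    compute_degree!; simp [hlx.ne', hly.ne']
  rcases eq_or_ne ρ 0 with h0 | h0
  · -- ρ = 0 : explicit factorization
    subst h0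
    have e1 : (C (-lx)) * (X - C (1/lx)) = 1 - C lx * X := by
      have h : (-lx) * (1/lx) = -1 := by field_simp
      rw [mul_sub, ← C_mul, h]
      simp [map_neg]
      ring
    have e2 : (C (-ly)) * (X - C (1/ly)) = 1 - C ly * X := by
      have h : (-ly) * (1/ly) = -1 := by field_simp
      rw [mul_sub, ← C_mul, h]
      simp [map_neg]
      ring
    have hfac : p = (X - C (-1)) * ((C (-lx)) * (X - C (1/lx))) * ((C (-ly)) * (X - C (1/ly))) := by
      rw [e1, e2, hp]
      simp only [C_1, map_sub, map_mul, map_one, map_pow, map_zero, C_0, map_neg]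
      ring
    have hne1 : (X - C (-1) : ℝ[X]) ≠ 0 := X_sub_C_ne_zero _
    have hne2 : (C (-lx)) * (X - C (1/lx)) ≠ 0 :=
      mul_ne_zero (by simpa using hlx.ne') (X_sub_C_ne_zero _)
    have hne3 : (C (-ly)) * (X - C (1/ly)) ≠ 0 :=
      mul_ne_zero (by simpa using hly.ne') (X_sub_C_ne_zero _)
    have hroots : p.roots = {-1, 1/lx, 1/ly} := by
      rw [hfac, roots_mul (mul_ne_zero (mul_ne_zero hne1 hne2) hne3),
        roots_mul (mul_ne_zero hne1 hne2),
        roots_C_mul _ (show (-lx : ℝ) ≠ 0 by simpa using hlx.ne'),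
        roots_C_mul _ (show (-ly : ℝ) ≠ 0 by simpa using hly.ne'),
        roots_X_sub_C, roots_X_sub_C, roots_X_sub_C]
      rfl
    rw [hroots]
    have h1 : ¬ (0 : ℝ) < -1 := by norm_num
    have h2 : (0 : ℝ) < 1/lx := by positivity
    have h3 : (0 : ℝ) < 1/ly := by positivity
    simp [Multiset.filter_cons, Multiset.filter_singleton, h1, hlx, hly]
  · -- ρ ≠ 0 : three distinct simple roots
    have hρpos : 0 < ρ ^ 2 := by positivity
    have hevlx : p.eval (1/lx) = -(ρ ^ 2 * ly) := by
      rw [heval]; field_simp; ring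
    have hlxpos : (0:ℝ) < 1/lx := by positivity
    have hneg2 : p.eval (-2) < 0 := by
      rw [heval]; nlinarith [mul_pos hlx hly]
    have hzero : p.eval 0 = 1 := by rw [heval]; ring
    have hNval : p.eval (1/lx + 1/ly + 1) =
        (2 + 1/lx + 1/ly) * (1 + lx + ly + lx * ly) - ρ ^ 2 * (lx + ly + lx * ly) := by
      rw [heval]; field_simp; ring
    have hN : 0 < p.eval (1/lx + 1/ly + 1) := by
      rw [hNval]
      have hS : (0:ℝ) < lx + ly + lx * ly := by positivity
      have h1x : (0:ℝ) < 1/lx := by positivity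
      have h1y : (0:ℝ) < 1/ly := by positivity
      nlinarith
    have hlxN : 1/lx < 1/lx + 1/ly + 1 := by
      have : (0:ℝ) < 1/ly := by positivity
      linarith
    -- root a in (-2, 0)
    obtain ⟨a, ha, haroot⟩ : ∃ a ∈ Set.Ioo (-2 : ℝ) 0, p.eval a = 0 := by
      have := intermediate_value_Ioo (by norm_num : (-2:ℝ) ≤ 0) (p.continuousOn)
      have h0mem : (0:ℝ) ∈ Set.Ioo (p.eval (-2)) (p.eval 0) := by
        constructor
        · exact hneg2
        · rw [hzero]; norm_num
      obtain ⟨a, ha, h⟩ := this h0mem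
      exact ⟨a, ha, h⟩
    -- root b in (0, 1/lx)
    obtain ⟨b, hb, hbroot⟩ : ∃ b ∈ Set.Ioo (0:ℝ) (1/lx), p.eval b = 0 := by
      have := intermediate_value_Ioo' (le_of_lt hlxpos) (p.continuousOn)
      have h0mem : (0:ℝ) ∈ Set.Ioo (p.eval (1/lx)) (p.eval 0) := by
        constructor
        · rw [hevlx]; nlinarith [mul_pos hρpos hly]
        · rw [hzero]; norm_num
      obtain ⟨b, hb, h⟩ := this h0mem
      exact ⟨b, hb, h⟩
    -- root c in (1/lx, N)
    obtain ⟨c, hc, hcroot⟩ : ∃ c ∈ Set.Ioo (1/lx) (1/lx + 1/ly + 1), p.eval c = 0 := by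
      have := intermediate_value_Ioo (le_of_lt hlxN) (p.continuousOn)
      have h0mem : (0:ℝ) ∈ Set.Ioo (p.eval (1/lx)) (p.eval (1/lx + 1/ly + 1)) := by
        constructor
        · rw [hevlx]; nlinarith [mul_pos hρpos hly]
        · exact hN
      obtain ⟨c, hc, h⟩ := this h0mem
      exact ⟨c, hc, h⟩
    have hab : a ≠ b := by have := ha.2; have := hb.1; intro h; subst h; linarith
    have hac : a ≠ c := by
      have := ha.2; have := hc.1; intro h; subst h; linarith
    have hbc : b ≠ c := by have := hb.2; have := hc.1; intro h; subst h; linarith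
    have hnodup : ({a, b, c} : Multiset ℝ).Nodup := by
      refine Multiset.nodup_cons.mpr ⟨?_, Multiset.nodup_cons.mpr ⟨?_, Multiset.nodup_singleton _⟩⟩
      · simp [hab, hac]
      · simp [hbc]
    have hsub : ({a, b, c} : Multiset ℝ) ≤ p.roots := by
      rw [Multiset.le_iff_subset hnodup]
      intro x hx
      rw [mem_roots hp0]
      rcases Multiset.mem_cons.mp hx with rfl | hx
      · exact haroot
      rcases Multiset.mem_cons.mp hx with rfl | hx
      · exact hbroot
      rw [Multiset.mem_singleton] at hx
      subst hx
      exact hcroot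
    have hcard : Multiset.card p.roots ≤ 3 := by
      simpa [hdeg] using p.card_roots'
    have hroots : p.roots = {a, b, c} := by
      refine (Multiset.eq_of_le_of_card_le hsub ?_).symm
      simpa using hcard
    rw [hroots]
    have hanp : ¬ (0 < a) := by have := ha.2; linarith
    have hbp : 0 < b := hb.1
    have hcp : 0 < c := lt_trans hlxpos hc.1
    simp [Multiset.filter_cons, Multiset.filter_singleton, hanp, hbp, hcp]
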